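/- arXiv:2305.16695 — 2 statements merged into one kernel-verified Lean document; each statement's English description precedes it below -/
import Mathlib

section
/- Any publishers game with the linear RRP ranking function r̂_i(x) = (1/n)·ν_i(x) + 1/n has an exact potential function given by φ(x) = Σ_{i=1}^n ( −g(d*(x_i)) − λ·d_0(x_i) ), where g(t) = t/n + 1/n; that is, for every player i, every x_{-i}, and all deviations x'_i, x''_i: φ(x'_i, x_{-i}) − φ(x''_i, x_{-i}) = u_i(x'_i, x_{-i}) − u_i(x''_i, x_{-i}). -/
noncomputable section

/-- Relative relevance of player i at profile x, given the distance d* to the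
information need. -/
def relRel (n k : ℕ) (dstar : (Fin k → ℝ) → ℝ) (x : Fin n → (Fin k → ℝ))
    (i : Fin n) : ℝ :=
  (1 / ((n : ℝ) - 1)) * (∑ j ∈ Finset.univ.erase i, dstar (x j)) - dstar (x i)

/-- Linear RRP ranking function r̂_i = (1/n)·ν_i + 1/n. -/
def linRank (n k : ℕ) (dstar : (Fin k → ℝ) → ℝ) (x : Fin n → (Fin k → ℝ))
    (i : Fin n) : ℝ :=
  (1 / (n : ℝ)) * relRel n k dstar x i + 1 / (n : ℝ)

/-- Utility of publisher i: ranking probability minus λ times distance from the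
initial document. -/
def util (n k : ℕ) (lam : ℝ) (dstar : (Fin k → ℝ) → ℝ)
    (d0 : Fin n → (Fin k → ℝ) → ℝ) (x : Fin n → (Fin k → ℝ)) (i : Fin n) : ℝ :=
  linRank n k dstar x i - lam * d0 i (x i)

/-- The potential φ(x) = ∑_i (−g(d*(x_i)) − λ d_0(x_i)) with g(t) = t/n + 1/n. -/
def pot (n k : ℕ) (lam : ℝ) (dstar : (Fin k → ℝ) → ℝ)
    (d0 : Fin n → (Fin k → ℝ) → ℝ) (x : Fin n → (Fin k → ℝ)) : ℝ :=
  ∑ i, (-(dstar (x i) / (n : ℝ) + 1 / (n : ℝ)) - lam * d0 i (x i))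

/-- φ is an exact potential for the publishers game with the linear RRP
ranking function. -/
theorem linRank_exact_potential (n k : ℕ) (hn : 2 ≤ n) (lam : ℝ) (hlam : 0 < lam)
    (dstar : (Fin k → ℝ) → ℝ) (hdstar : ∀ y, dstar y ∈ Set.Icc (0 : ℝ) 1)
    (d0 : Fin n → (Fin k → ℝ) → ℝ) (hd0 : ∀ i y, d0 i y ∈ Set.Icc (0 : ℝ) 1)
    (x : Fin n → (Fin k → ℝ)) (i : Fin n) (x' x'' : Fin k → ℝ) :
    pot n k lam dstar d0 (Function.update x i x') -
      pot n k lam dstar d0 (Function.update x i x'') =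
    util n k lam dstar d0 (Function.update x i x') i -
      util n k lam dstar d0 (Function.update x i x'') i := by
  classical
  have hsum : ∀ v : Fin k → ℝ,
      pot n k lam dstar d0 (Function.update x i v) =
      (-(dstar v / (n : ℝ) + 1 / (n : ℝ)) - lam * d0 i v) +
        ∑ j ∈ Finset.univ.erase i,
          (-(dstar (x j) / (n : ℝ) + 1 / (n : ℝ)) - lam * d0 j (x j)) := by
    intro v
    rw [pot, ← Finset.add_sum_erase _ _ (Finset.mem_univ i)]
    congr 1
    · simp
    · exact Finset.sum_congr rfl fun j hj => by
        rw [Function.update_of_ne (Finset.ne_of_mem_erase hj)]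
  have hrank : ∀ v : Fin k → ℝ,
      relRel n k dstar (Function.update x i v) i =
      (1 / ((n : ℝ) - 1)) * (∑ j ∈ Finset.univ.erase i, dstar (x j)) - dstar v := by
    intro v
    rw [relRel, Function.update_self]
    congr 2
    exact Finset.sum_congr rfl fun j hj => by
      rw [Function.update_of_ne (Finset.ne_of_mem_erase hj)]
  simp only [hsum, util, linRank, hrank, Function.update_self]
  ring

end
end

section
/- More generally, for any slope 0 < a ≤ 1/n, the publishers game with ranking function r̂^a_i(x) = a·ν_i(x) + 1/n has the exact potential φ(x) = Σ_{i=1}^n ( −a·d*(x_i) − λ·d_0(x_i) ). -/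
noncomputable section

/-- Linear RRP ranking function with slope a: r̂^a_i = a·ν_i + 1/n. -/
def linRankA (n k : ℕ) (a : ℝ) (dstar : (Fin k → ℝ) → ℝ)
    (x : Fin n → (Fin k → ℝ)) (i : Fin n) : ℝ :=
  a * relRel n k dstar x i + 1 / (n : ℝ)

def utilA (n k : ℕ) (a lam : ℝ) (dstar : (Fin k → ℝ) → ℝ)
    (d0 : Fin n → (Fin k → ℝ) → ℝ) (x : Fin n → (Fin k → ℝ)) (i : Fin n) : ℝ :=
  linRankA n k a dstar x i - lam * d0 i (x i)

/-- φ(x) = ∑_i (−a·d*(x_i) − λ·d_0(x_i)). -/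
def potA (n k : ℕ) (a lam : ℝ) (dstar : (Fin k → ℝ) → ℝ)
    (d0 : Fin n → (Fin k → ℝ) → ℝ) (x : Fin n → (Fin k → ℝ)) : ℝ :=
  ∑ i, (-(a * dstar (x i)) - lam * d0 i (x i))

/-- For any slope 0 < a ≤ 1/n, φ is an exact potential for the publishers game
with ranking function r̂^a. -/
theorem linRankA_exact_potential (n k : ℕ) (hn : 2 ≤ n) (a lam : ℝ)
    (ha : 0 < a) (ha' : a ≤ 1 / (n : ℝ)) (hlam : 0 < lam)
    (dstar : (Fin k → ℝ) → ℝ) (hdstar : ∀ y, dstar y ∈ Set.Icc (0 : ℝ) 1)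
    (d0 : Fin n → (Fin k → ℝ) → ℝ) (hd0 : ∀ i y, d0 i y ∈ Set.Icc (0 : ℝ) 1)
    (x : Fin n → (Fin k → ℝ)) (i : Fin n) (x' x'' : Fin k → ℝ) :
    potA n k a lam dstar d0 (Function.update x i x') -
      potA n k a lam dstar d0 (Function.update x i x'') =
    utilA n k a lam dstar d0 (Function.update x i x') i -
      utilA n k a lam dstar d0 (Function.update x i x'') i := by
  have hsum : ∀ y : Fin k → ℝ,
      ∑ j ∈ Finset.univ.erase i, dstar (Function.update x i y j)
        = ∑ j ∈ Finset.univ.erase i, dstar (x j) := by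
    intro y
    refine Finset.sum_congr rfl fun j hj => ?_
    rw [Function.update_of_ne (Finset.ne_of_mem_erase hj)]
  have hpot : ∀ y : Fin k → ℝ,
      potA n k a lam dstar d0 (Function.update x i y)
        = (-(a * dstar y) - lam * d0 i y)
          + ∑ j ∈ Finset.univ.erase i,
              (-(a * dstar (x j)) - lam * d0 j (x j)) := by
    intro y
    unfold potA
    rw [← Finset.add_sum_erase _ _ (Finset.mem_univ i), Function.update_self]
    congr 1
    refine Finset.sum_congr rfl fun j hj => ?_
    rw [Function.update_of_ne (Finset.ne_of_mem_erase hj)]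
  rw [hpot, hpot]
  unfold utilA linRankA relRel
  rw [Function.update_self, Function.update_self, hsum, hsum]
  ring

end
end
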